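/- Let h be a self-adjoint operator on L²(Q,μ) bounded from below such that e^{-th} is positivity preserving for every t > 0. Then for all nonnegative f, g in the form domain Q(h), the function √(f²+g²) lies in Q(h) and (√(f²+g²), h√(f²+g²)) ≤ (f, hf) + (g, hg). -/

import Mathlib

open MeasureTheory Filter Topology

section Aux
open Set

private lemma aux_cs (p q A B : ℝ) :
    p*A + q*B ≤ Real.sqrt (p^2+q^2) * Real.sqrt (A^2+B^2) := by
  have h0 : (p*A+q*B)^2 ≤ (p^2+q^2)*(A^2+B^2) := by nlinarith [sq_nonneg (p*B - q*A)]
  calc p*A + q*B ≤ |p*A + q*B| := le_abs_self _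
    _ = Real.sqrt ((p*A+q*B)^2) := (Real.sqrt_sq_eq_abs _).symm
    _ ≤ Real.sqrt ((p^2+q^2)*(A^2+B^2)) := Real.sqrt_le_sqrt h0
    _ = Real.sqrt (p^2+q^2) * Real.sqrt (A^2+B^2) := Real.sqrt_mul (by positivity) _

private lemma aux_dense (A B C : ℝ)
    (h : ∀ p q : ℚ, (p:ℝ)*A + (q:ℝ)*B ≤ Real.sqrt ((p:ℝ)^2+(q:ℝ)^2)*C) : A^2+B^2 ≤ C^2 := by
  have key : ∀ x y : ℝ, x*A + y*B ≤ Real.sqrt (x^2+y^2)*C := by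
    have hcl : IsClosed {z : ℝ × ℝ | z.1*A + z.2*B ≤ Real.sqrt (z.1^2+z.2^2)*C} := by
      apply isClosed_le
      · fun_prop
      · apply Continuous.mul _ continuous_const
        exact (continuous_fst.pow 2 |>.add (continuous_snd.pow 2)).sqrt
    have hdense : Dense (Set.range (fun z : ℚ × ℚ => ((z.1 : ℝ), (z.2 : ℝ)))) :=
      (Rat.denseRange_cast (𝕜 := ℝ)).prodMap (Rat.denseRange_cast (𝕜 := ℝ))
    intro x y
    have hsub : Set.range (fun z : ℚ × ℚ => ((z.1 : ℝ), (z.2 : ℝ))) ⊆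
        {z : ℝ × ℝ | z.1*A + z.2*B ≤ Real.sqrt (z.1^2+z.2^2)*C} := by
      rintro _ ⟨⟨p, q⟩, rfl⟩; exact h p q
    have hcc : closure (Set.range (fun z : ℚ × ℚ => ((z.1 : ℝ), (z.2 : ℝ)))) ⊆
        {z : ℝ × ℝ | z.1*A + z.2*B ≤ Real.sqrt (z.1^2+z.2^2)*C} :=
      hcl.closure_subset_iff.2 hsub
    have hx : ((x, y) : ℝ × ℝ) ∈
        closure (Set.range (fun z : ℚ × ℚ => ((z.1 : ℝ), (z.2 : ℝ)))) := by
      rw [hdense.closure_eq]; trivial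
    exact hcc hx
  have h1 := key A B
  have h2 : Real.sqrt (A^2+B^2) ^ 2 = A^2+B^2 := Real.sq_sqrt (by positivity)
  have h3 : (0:ℝ) ≤ Real.sqrt (A^2+B^2) := Real.sqrt_nonneg _
  nlinarith [sq_nonneg (Real.sqrt (A^2+B^2) - C)]

private lemma aux_dyadic (a : ℝ → ℝ)
    (hmid : ∀ x y : ℝ, 0 < x → 0 < y → a ((x+y)/2) ≤ (a x + a y)/2) :
    ∀ n : ℕ, ∀ j : ℕ, j ≤ 2^n → ∀ x y : ℝ, 0 < x → 0 < y →
      a ((j/2^n)*x + (1 - j/2^n)*y) ≤ (j/2^n)*a x + (1 - j/2^n)*a y := by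
  intro n
  induction n with
  | zero =>
    intro j hj x y hx hy
    interval_cases j <;> norm_num
  | succ n ih =>
    intro j hj x y hx hy
    rcases Nat.even_or_odd j with ⟨i, hi⟩ | ⟨i, hi⟩
    · subst hi
      have hij : i ≤ 2^n := by
        have : 2*i ≤ 2*2^n := by rw [pow_succ] at hj; omega
        omega
      have := ih i hij x y hx hy
      have hcast : ((i + i : ℕ) : ℝ)/2^(n+1) = (i:ℝ)/2^n := by
        push_cast [pow_succ]; ring
      rw [hcast]; exact this
    · subst hi
      have hij : i + 1 ≤ 2^n := by
        have h2 : 2*i + 1 ≤ 2^(n+1) := hj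
        rw [pow_succ] at h2; omega
      have hi1 : i ≤ 2^n := le_trans (Nat.le_succ i) hij
      set μ₁ : ℝ := (i:ℝ)/2^n with hμ₁
      set μ₂ : ℝ := ((i:ℝ)+1)/2^n with hμ₂
      have hμ₁0 : 0 ≤ μ₁ := by positivity
      have hμ₂0 : 0 ≤ μ₂ := by positivity
      have hμ₁1 : μ₁ ≤ 1 := by
        rw [hμ₁, div_le_one (by positivity)]
        exact_mod_cast hi1
      have hμ₂1 : μ₂ ≤ 1 := by
        rw [hμ₂, div_le_one (by positivity)]
        have : ((i:ℝ)+1) = ((i+1 : ℕ) : ℝ) := by push_cast; ring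
        rw [this]; exact_mod_cast hij
      have hz₁ : 0 < μ₁*x + (1-μ₁)*y := by
        nlinarith [mul_nonneg hμ₁0 (sub_nonneg.2 (min_le_left x y)),
          mul_nonneg (sub_nonneg.2 hμ₁1) (sub_nonneg.2 (min_le_right x y)), lt_min hx hy]
      have hz₂ : 0 < μ₂*x + (1-μ₂)*y := by
        nlinarith [mul_nonneg hμ₂0 (sub_nonneg.2 (min_le_left x y)),
          mul_nonneg (sub_nonneg.2 hμ₂1) (sub_nonneg.2 (min_le_right x y)), lt_min hx hy]
      have h1 := ih i hi1 x y hx hy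
      have h2' := ih (i+1) hij x y hx hy
      have hc2 : ((i+1 : ℕ) : ℝ)/2^n = μ₂ := by push_cast; ring
      rw [hc2] at h2'
      have hmid' := hmid _ _ hz₁ hz₂
      have hlam : ((2*i+1 : ℕ) : ℝ)/2^(n+1) = (μ₁ + μ₂)/2 := by
        rw [hμ₁, hμ₂]; push_cast [pow_succ]; ring
      rw [hlam]
      have hpt : ((μ₁+μ₂)/2)*x + (1-(μ₁+μ₂)/2)*y
          = ((μ₁*x + (1-μ₁)*y) + (μ₂*x + (1-μ₂)*y))/2 := by ring
      rw [hpt]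
      calc a (((μ₁*x + (1-μ₁)*y) + (μ₂*x + (1-μ₂)*y))/2)
          ≤ (a (μ₁*x + (1-μ₁)*y) + a (μ₂*x + (1-μ₂)*y))/2 := hmid'
        _ ≤ ((μ₁*a x + (1-μ₁)*a y) + (μ₂*a x + (1-μ₂)*a y))/2 := by linarith
        _ = ((μ₁+μ₂)/2)*a x + (1-(μ₁+μ₂)/2)*a y := by ring

private lemma aux_extconvex (a : ℝ → ℝ) (b c : ℝ)
    (hmid : ∀ x y : ℝ, 0 < x → 0 < y → a ((x+y)/2) ≤ (a x + a y)/2)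
    (hbd : ∀ t : ℝ, 0 < t → a t ≤ Real.exp (t*b) * c)
    {t t' : ℝ} (ht : 0 < t) (htt' : t < t') :
    a t ≤ (t/t') * a t' + (1 - t/t') * c := by
  have ht' : 0 < t' := ht.trans htt'
  set θ : ℝ := t/t' with hθ
  have hθ0 : 0 < θ := div_pos ht ht'
  have hθ1 : θ < 1 := (div_lt_one ht').2 htt'
  set lam : ℕ → ℝ := fun n => ((⌈(2^n : ℝ)*θ⌉ : ℝ) - 1)/2^n with hlam
  have h2n : ∀ n : ℕ, (0:ℝ) < 2^n := fun n => by positivity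
  have hlam_lt : ∀ n, lam n < θ := by
    intro n
    rw [hlam]
    rw [div_lt_iff₀ (h2n n)]
    have := Int.ceil_lt_add_one ((2^n : ℝ)*θ)
    linarith [this]
  have hlam_ge : ∀ n, θ - 1/2^n ≤ lam n := by
    intro n
    rw [hlam, le_div_iff₀ (h2n n)]
    have := Int.le_ceil ((2^n : ℝ)*θ)
    have h2 : (2:ℝ)^n ≠ 0 := (h2n n).ne'
    field_simp
    linarith [this, Int.le_ceil (θ * 2^n)]
  have hlam_nonneg : ∀ n, 0 ≤ lam n := by
    intro n
    rw [hlam]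
    apply div_nonneg _ (h2n n).le
    have : 0 < ⌈(2^n : ℝ)*θ⌉ := Int.ceil_pos.2 (by positivity)
    have : (1:ℝ) ≤ (⌈(2^n : ℝ)*θ⌉ : ℝ) := by exact_mod_cast this
    linarith
  have hlam1 : ∀ n, lam n < 1 := fun n => (hlam_lt n).trans hθ1
  have hj : ∀ n, ∃ j : ℕ, j ≤ 2^n ∧ (j : ℝ)/2^n = lam n := by
    intro n
    refine ⟨(⌈(2^n : ℝ)*θ⌉ - 1).toNat, ?_, ?_⟩
    · have hle : ⌈(2^n : ℝ)*θ⌉ ≤ 2^n := by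
        apply Int.ceil_le.2
        push_cast
        nlinarith [h2n n]
      rw [Int.toNat_le]
      push_cast
      linarith [hle]
    · have hpos : 0 < ⌈(2^n : ℝ)*θ⌉ := Int.ceil_pos.2 (by positivity)
      have h0 : (0:ℤ) ≤ ⌈(2^n : ℝ)*θ⌉ - 1 := by omega
      have htn : ((⌈(2^n : ℝ)*θ⌉ - 1).toNat : ℤ) = ⌈(2^n : ℝ)*θ⌉ - 1 := Int.toNat_of_nonneg h0
      have hc : ((⌈(2^n : ℝ)*θ⌉ - 1).toNat : ℝ) = (⌈(2^n : ℝ)*θ⌉ : ℝ) - 1 := by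
        calc ((⌈(2^n : ℝ)*θ⌉ - 1).toNat : ℝ)
            = (((⌈(2^n : ℝ)*θ⌉ - 1).toNat : ℤ) : ℝ) := by push_cast; ring
          _ = ((⌈(2^n : ℝ)*θ⌉ - 1 : ℤ) : ℝ) := by rw [htn]
          _ = (⌈(2^n : ℝ)*θ⌉ : ℝ) - 1 := by push_cast; ring
      rw [hc, hlam]
  set ε : ℕ → ℝ := fun n => (t - lam n * t')/(1 - lam n) with hε
  have hεpos : ∀ n, 0 < ε n := by
    intro n
    apply div_pos _ (by linarith [hlam1 n])
    have : lam n * t' < θ * t' := by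
      apply mul_lt_mul_of_pos_right (hlam_lt n) ht'
    have : θ * t' = t := by rw [hθ, div_mul_cancel₀ t ht'.ne']
    nlinarith [hlam_lt n, ht']
  have hid : ∀ n, t = lam n * t' + (1 - lam n) * ε n := by
    intro n
    have h1 : (1:ℝ) - lam n ≠ 0 := by linarith [hlam1 n]
    rw [hε]
    field_simp
    ring
  have hkey : ∀ n, a t ≤ lam n * a t' + (1 - lam n) * (Real.exp (ε n * b) * c) := by
    intro n
    obtain ⟨j, hjle, hjeq⟩ := hj n
    have hd := aux_dyadic a hmid n j hjle t' (ε n) ht' (hεpos n)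
    rw [hjeq] at hd
    have hpt : lam n * t' + (1 - lam n) * ε n = t := (hid n).symm
    rw [hpt] at hd
    refine hd.trans ?_
    have := hbd (ε n) (hεpos n)
    have h1n : (0:ℝ) ≤ 1 - lam n := by linarith [hlam1 n]
    nlinarith [this, h1n]
  have hhalf : Tendsto (fun n : ℕ => (1:ℝ)/2^n) atTop (𝓝 0) := by
    simp_rw [one_div, ← inv_pow]
    exact tendsto_pow_atTop_nhds_zero_of_lt_one (by norm_num) (by norm_num)
  have hlamlim : Tendsto lam atTop (𝓝 θ) := by
    apply tendsto_of_tendsto_of_tendsto_of_le_of_le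
      (g := fun n => θ - 1/2^n) (h := fun _ => θ)
    · simpa using (tendsto_const_nhds (x := θ)).sub hhalf
    · exact tendsto_const_nhds
    · exact hlam_ge
    · exact fun n => (hlam_lt n).le
  have hεlim : Tendsto ε atTop (𝓝 0) := by
    have hnum : Tendsto (fun n => t - lam n * t') atTop (𝓝 (t - θ * t')) :=
      (tendsto_const_nhds).sub (hlamlim.mul tendsto_const_nhds)
    have hden : Tendsto (fun n => 1 - lam n) atTop (𝓝 (1 - θ)) :=
      (tendsto_const_nhds).sub hlamlim
    have := hnum.div hden (by linarith : (1:ℝ) - θ ≠ 0)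
    have hz : (t - θ * t')/(1 - θ) = 0 := by
      have : t - θ * t' = 0 := by rw [hθ, div_mul_cancel₀ t ht'.ne', sub_self]
      rw [this, zero_div]
    rwa [hz] at this
  have hexplim : Tendsto (fun n => Real.exp (ε n * b)) atTop (𝓝 1) := by
    have : Tendsto (fun n => ε n * b) atTop (𝓝 0) := by
      simpa using hεlim.mul tendsto_const_nhds
    simpa [Function.comp_def] using (Real.continuous_exp.tendsto 0).comp this
  have hRHS : Tendsto (fun n => lam n * a t' + (1 - lam n) * (Real.exp (ε n * b) * c))
      atTop (𝓝 (θ * a t' + (1 - θ) * (1 * c))) :=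
    (hlamlim.mul tendsto_const_nhds).add
      (((tendsto_const_nhds).sub hlamlim).mul (hexplim.mul tendsto_const_nhds))
  have hfin := ge_of_tendsto hRHS (Eventually.of_forall hkey)
  have : θ * a t' + (1 - θ) * (1 * c) = θ * a t' + (1 - θ) * c := by ring
  linarith [hfin]

end Aux

/-- The semigroup `P t = e^{-t h}` of a self-adjoint operator `h` on `L²(Q,μ)` that is
bounded from below and whose semigroup is positivity preserving for all `t > 0`. -/
structure HeatSemigroup {Q : Type*} [MeasurableSpace Q] (μ : Measure Q) where
  P : ℝ → (Lp ℝ 2 μ →L[ℝ] Lp ℝ 2 μ)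
  selfAdj : ∀ t > 0, ∀ u v : Lp ℝ 2 μ, (inner ℝ (P t u) v : ℝ) = inner ℝ u (P t v)
  posPres : ∀ t > 0, ∀ u : Lp ℝ 2 μ, 0 ≤ u → 0 ≤ P t u
  semigroup : ∀ s > 0, ∀ t > 0, P (s + t) = (P s).comp (P t)
  /-- semiboundedness of `h` (i.e. `h ≥ -b`) at the semigroup level -/
  bddBelow : ∃ b : ℝ, ∀ t > 0, ‖P t‖ ≤ Real.exp (t * b)

/-- For a semibounded self-adjoint `h` with positivity-preserving semigroup,
and nonnegative `f, g` in the form domain `Q(h)` (membership and the form values `qf, qg`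
being encoded by convergence of `t⁻¹⟨u,(1-e^{-th})u⟩` as `t → 0⁺`), any `s ∈ L²`
representing `√(f²+g²)` lies in `Q(h)` and `(s, h s) ≤ (f, h f) + (g, h g)`. -/
theorem stmt4 {Q : Type*} [MeasurableSpace Q] (μ : Measure Q) [SigmaFinite μ]
    (H : HeatSemigroup μ) (f g s : Lp ℝ 2 μ) (hfpos : 0 ≤ f) (hgpos : 0 ≤ g)
    (qf qg : ℝ)
    (hf : Tendsto (fun t : ℝ => (inner ℝ f (f - H.P t f) : ℝ) / t)
      (nhdsWithin 0 (Set.Ioi 0)) (nhds qf))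
    (hg : Tendsto (fun t : ℝ => (inner ℝ g (g - H.P t g) : ℝ) / t)
      (nhdsWithin 0 (Set.Ioi 0)) (nhds qg))
    (hs : (s : Q → ℝ) =ᵐ[μ] fun q => Real.sqrt ((f : Q → ℝ) q ^ 2 + (g : Q → ℝ) q ^ 2)) :
    ∃ qs : ℝ,
      Tendsto (fun t : ℝ => (inner ℝ s (s - H.P t s) : ℝ) / t)
        (nhdsWithin 0 (Set.Ioi 0)) (nhds qs) ∧
      qs ≤ qf + qg := by
  classical
  obtain ⟨b, hb⟩ := H.bddBelow
  -- inner products as integrals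
  have hinner : ∀ u v : Lp ℝ 2 μ, (inner ℝ u v : ℝ) = ∫ x, u x * v x ∂μ := by
    intro u v; rw [L2.inner_def]; congr 1; funext x; simp [mul_comm]
  have hint : ∀ u v : Lp ℝ 2 μ, Integrable (fun x => u x * v x) μ := by
    intro u v
    have := L2.integrable_inner (𝕜 := ℝ) u v
    simpa [RCLike.inner_apply, mul_comm] using this
  -- splitting of the semigroup
  have hP2 : ∀ t : ℝ, 0 < t → ∀ u : Lp ℝ 2 μ,
      (inner ℝ u (H.P t u) : ℝ) = inner ℝ (H.P (t/2) u) (H.P (t/2) u) := by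
    intro t ht u
    have h2 : (0:ℝ) < t/2 := by linarith
    have hsg := H.semigroup (t/2) h2 (t/2) h2
    rw [show t/2 + t/2 = t by ring] at hsg
    rw [hsg]
    simp only [ContinuousLinearMap.comp_apply]
    exact (H.selfAdj (t/2) h2 u (H.P (t/2) u)).symm
  have hPcross : ∀ x y : ℝ, 0 < x → 0 < y →
      (inner ℝ s (H.P ((x+y)/2) s) : ℝ) = inner ℝ (H.P (x/2) s) (H.P (y/2) s) := by
    intro x y hx hy
    have hx2 : (0:ℝ) < x/2 := by linarith
    have hy2 : (0:ℝ) < y/2 := by linarith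
    have hsg := H.semigroup (x/2) hx2 (y/2) hy2
    rw [show x/2 + y/2 = (x+y)/2 by ring] at hsg
    rw [hsg]
    simp only [ContinuousLinearMap.comp_apply]
    exact (H.selfAdj (x/2) hx2 s (H.P (y/2) s)).symm
  -- monotonicity of the semigroup
  have hmono : ∀ t : ℝ, 0 < t → ∀ u v : Lp ℝ 2 μ, u ≤ v → H.P t u ≤ H.P t v := by
    intro t ht u v huv
    have := H.posPres t ht (v - u) (sub_nonneg.2 huv)
    rw [map_sub] at this
    exact sub_nonneg.1 this
  -- nonnegativity of s
  have hspos : 0 ≤ s := by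
    refine (Lp.coeFn_nonneg _).1 ?_
    filter_upwards [hs] with x hx
    rw [hx]; exact Real.sqrt_nonneg _
  -- key comparison ⟨f,P_t f⟩ + ⟨g,P_t g⟩ ≤ ⟨s,P_t s⟩
  have hcomp : ∀ t : ℝ, 0 < t →
      (inner ℝ f (H.P t f) : ℝ) + (inner ℝ g (H.P t g) : ℝ) ≤ (inner ℝ s (H.P t s) : ℝ) := by
    intro t ht
    have hτ : (0:ℝ) < t/2 := by linarith
    set u : Lp ℝ 2 μ := H.P (t/2) f with hu
    set v : Lp ℝ 2 μ := H.P (t/2) g with hv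
    set w : Lp ℝ 2 μ := H.P (t/2) s with hw
    -- pointwise family over rationals
    have hpq : ∀ p q : ℚ, ∀ᵐ x ∂μ,
        (p:ℝ) * u x + (q:ℝ) * v x ≤ Real.sqrt ((p:ℝ)^2+(q:ℝ)^2) * w x := by
      intro p q
      have h1 : ((p:ℝ) • f + (q:ℝ) • g) ≤ (Real.sqrt ((p:ℝ)^2+(q:ℝ)^2)) • s := by
        rw [← Lp.coeFn_le]
        filter_upwards [hs, Lp.coeFn_add ((p:ℝ) • f) ((q:ℝ) • g), Lp.coeFn_smul (p:ℝ) f,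
          Lp.coeFn_smul (q:ℝ) g, Lp.coeFn_smul (Real.sqrt ((p:ℝ)^2+(q:ℝ)^2)) s]
          with x hx h2 h3 h4 h5
        simp only [Pi.add_apply] at h2
        rw [h2, h3, h4, h5]
        simp only [Pi.smul_apply, smul_eq_mul]
        rw [hx]
        exact aux_cs _ _ _ _
      have h2 := hmono (t/2) hτ _ _ h1
      simp only [map_add, ContinuousLinearMap.map_smul] at h2
      rw [← Lp.coeFn_le] at h2
      filter_upwards [h2, Lp.coeFn_add ((p:ℝ) • u) ((q:ℝ) • v), Lp.coeFn_smul (p:ℝ) u,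
        Lp.coeFn_smul (q:ℝ) v, Lp.coeFn_smul (Real.sqrt ((p:ℝ)^2+(q:ℝ)^2)) w]
        with x hx h3 h4 h5 h6
      simp only [Pi.add_apply] at h3
      rw [h3, h4, h5] at hx
      rw [h6] at hx
      simpa [smul_eq_mul] using hx
    have hwpos : ∀ᵐ x ∂μ, 0 ≤ w x :=
      (Lp.coeFn_nonneg _).2 (H.posPres (t/2) hτ s hspos)
    have hae : ∀ᵐ x ∂μ, u x * u x + v x * v x ≤ w x * w x := by
      have hall : ∀ᵐ x ∂μ, ∀ p q : ℚ,
          (p:ℝ) * u x + (q:ℝ) * v x ≤ Real.sqrt ((p:ℝ)^2+(q:ℝ)^2) * w x := by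
        rw [ae_all_iff]
        intro p
        rw [ae_all_iff]
        intro q
        exact hpq p q
      filter_upwards [hall, hwpos] with x hx hwx
      have := aux_dense (u x) (v x) (w x) hx
      nlinarith [this]
    -- integrate
    have hI : (inner ℝ u u : ℝ) + (inner ℝ v v : ℝ) ≤ (inner ℝ w w : ℝ) := by
      rw [hinner, hinner, hinner, ← integral_add (hint u u) (hint v v)]
      exact integral_mono_ae ((hint u u).add (hint v v)) (hint w w) hae
    rw [hP2 t ht f, hP2 t ht g, hP2 t ht s]
    exact hI
  -- ⟨s,s⟩ = ⟨f,f⟩ + ⟨g,g⟩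
  have hc : (inner ℝ s s : ℝ) = (inner ℝ f f : ℝ) + (inner ℝ g g : ℝ) := by
    rw [hinner, hinner, hinner, ← integral_add (hint f f) (hint g g)]
    apply integral_congr_ae
    filter_upwards [hs] with x hx
    have h0 : (0:ℝ) ≤ (f : Q → ℝ) x ^ 2 + (g : Q → ℝ) x ^ 2 := by positivity
    have := Real.sq_sqrt h0
    rw [hx]
    nlinarith [this]
  -- the function a
  set a : ℝ → ℝ := fun t => (inner ℝ s (H.P t s) : ℝ) with ha
  set c : ℝ := (inner ℝ s s : ℝ) with hcdef
  -- midpoint convexity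
  have hmid : ∀ x y : ℝ, 0 < x → 0 < y → a ((x+y)/2) ≤ (a x + a y)/2 := by
    intro x y hx hy
    have h1 : a ((x+y)/2) = inner ℝ (H.P (x/2) s) (H.P (y/2) s) := hPcross x y hx hy
    have h2 : a x = ‖H.P (x/2) s‖^2 := by
      show (inner ℝ s (H.P x s) : ℝ) = _
      rw [hP2 x hx s, real_inner_self_eq_norm_sq]
    have h3 : a y = ‖H.P (y/2) s‖^2 := by
      show (inner ℝ s (H.P y s) : ℝ) = _
      rw [hP2 y hy s, real_inner_self_eq_norm_sq]
    have h4 : (inner ℝ (H.P (x/2) s) (H.P (y/2) s) : ℝ) ≤ ‖H.P (x/2) s‖ * ‖H.P (y/2) s‖ :=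
      real_inner_le_norm _ _
    rw [h1, h2, h3]
    nlinarith [sq_nonneg (‖H.P (x/2) s‖ - ‖H.P (y/2) s‖)]
  -- bound near 0
  have hbd : ∀ t : ℝ, 0 < t → a t ≤ Real.exp (t*b) * c := by
    intro t ht
    have h1 : a t ≤ ‖s‖ * ‖H.P t s‖ := real_inner_le_norm _ _
    have h2 : ‖H.P t s‖ ≤ ‖H.P t‖ * ‖s‖ := (H.P t).le_opNorm s
    have h3 : ‖H.P t‖ ≤ Real.exp (t*b) := hb t ht
    have h4 : c = ‖s‖^2 := real_inner_self_eq_norm_sq s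
    have h5 : (0:ℝ) ≤ ‖s‖ := norm_nonneg _
    have h6 : (0:ℝ) ≤ ‖H.P t‖ := norm_nonneg _
    nlinarith [Real.exp_pos (t*b)]
  -- the quotient function
  set φ : ℝ → ℝ := fun t => (c - a t)/t with hφ
  -- φ is antitone on Ioi 0
  have hanti : AntitoneOn φ (Set.Ioi 0) := by
    intro x hx y hy hxy
    rcases eq_or_lt_of_le hxy with rfl | hlt
    · exact le_refl _
    have hx0 : (0:ℝ) < x := hx
    have hy0 : (0:ℝ) < y := lt_trans hx0 hlt
    have hconv := aux_extconvex a b c hmid hbd hx0 hlt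
    have hmul := mul_le_mul_of_nonneg_right hconv hy0.le
    have hrw : ((x/y) * a y + (1 - x/y) * c) * y = x * a y + (y - x) * c := by
      field_simp
    rw [hrw] at hmul
    show (c - a y)/y ≤ (c - a x)/x
    rw [div_le_div_iff₀ hy0 hx0]
    nlinarith [hmul]
  -- comparison of quotients
  have hφle : ∀ t : ℝ, 0 < t →
      φ t ≤ (inner ℝ f (f - H.P t f) : ℝ)/t + (inner ℝ g (g - H.P t g) : ℝ)/t := by
    intro t ht
    have h1 : (inner ℝ f (f - H.P t f) : ℝ) = (inner ℝ f f : ℝ) - (inner ℝ f (H.P t f) : ℝ) :=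
      inner_sub_right f f (H.P t f)
    have h2 : (inner ℝ g (g - H.P t g) : ℝ) = (inner ℝ g g : ℝ) - (inner ℝ g (H.P t g) : ℝ) :=
      inner_sub_right g g (H.P t g)
    show (c - a t)/t ≤ _
    rw [h1, h2]
    rw [← add_div, div_le_div_iff₀ ht ht]
    have h3 := hcomp t ht
    have h4 : c = (inner ℝ f f : ℝ) + (inner ℝ g g : ℝ) := hc
    nlinarith [mul_pos ht ht]
  -- bounded above
  have hbdd : BddAbove (φ '' Set.Ioi 0) := by
    have hev : ∀ᶠ t in nhdsWithin (0:ℝ) (Set.Ioi 0),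
        (inner ℝ f (f - H.P t f) : ℝ)/t + (inner ℝ g (g - H.P t g) : ℝ)/t < qf + qg + 1 := by
      apply (hf.add hg).eventually_lt_const
      linarith
    have hev2 : ∀ᶠ t in nhdsWithin (0:ℝ) (Set.Ioi 0), t ∈ Set.Ioi (0:ℝ) :=
      self_mem_nhdsWithin
    obtain ⟨δ', hδ'mem, hδ'⟩ := mem_nhdsGT_iff_exists_Ioo_subset.1 (hev.and hev2)
    have hδ'0 : (0:ℝ) < δ' := hδ'mem
    set t₀ : ℝ := δ'/2 with ht₀
    have ht₀mem : t₀ ∈ Set.Ioo (0:ℝ) δ' := by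
      constructor <;> [positivity; linarith]
    have ht₀bound := hδ' ht₀mem
    refine ⟨qf + qg + 1, ?_⟩
    rintro _ ⟨t, htmem, rfl⟩
    rcases lt_or_ge t δ' with hlt | hge
    · have := hδ' ⟨htmem, hlt⟩
      exact le_trans (hφle t htmem) this.1.le
    · have h1 : φ t ≤ φ t₀ := hanti ht₀mem.1 htmem (by linarith [ht₀mem.2])
      have h2 : φ t₀ ≤ _ := hφle t₀ ht₀mem.1
      exact le_trans h1 (le_trans h2 ht₀bound.1.le)
  -- the limit
  have htend : Tendsto φ (nhdsWithin 0 (Set.Ioi 0)) (nhds (sSup (φ '' Set.Ioi 0))) :=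
    hanti.tendsto_nhdsGT hbdd
  refine ⟨sSup (φ '' Set.Ioi 0), ?_, ?_⟩
  · apply htend.congr
    intro t
    show (c - a t)/t = _
    rw [inner_sub_right]
  · have hne : (nhdsWithin (0:ℝ) (Set.Ioi 0)).NeBot := nhdsGT_neBot 0
    refine le_of_tendsto_of_tendsto htend (hf.add hg) ?_
    filter_upwards [self_mem_nhdsWithin] with t ht
    exact hφle t ht
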